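/- A temporal graph G = (G, λ) admits a temporal transitive orientation if and only if there exists a linear order σ on its vertices such that for every triple a ≺_σ b ≺_σ c with ab ∈ E, bc ∈ E and λ(ab) ≤ λ(bc), the edge ac exists and satisfies λ(ac) ≥ λ(bc). -/

import Mathlib

def IsOrientation {V : Type*} (G : SimpleGraph V) (O : V → V → Prop) : Prop :=
  (∀ a b, O a b → G.Adj a b) ∧ (∀ a b, G.Adj a b → (O a b ↔ ¬ O b a))

def IsTTO {V : Type*} (G : SimpleGraph V) (lam : V → V → ℕ) (O : V → V → Prop) : Prop :=
  IsOrientation G O ∧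
    ∀ a b c, O a b → O b c → lam a b ≤ lam b c → O a c ∧ lam b c ≤ lam a c

section aux
variable {V : Type*} {G : SimpleGraph V} {lam : V → V → ℕ} {O : V → V → Prop}

lemma tto_asymm (h : IsTTO G lam O) {a b : V} (hab : O a b) : ¬ O b a := by
  have hadj := h.1.1 a b hab
  exact fun hba => ((h.1.2 a b hadj).1 hab) hba

lemma tto_irrefl (h : IsTTO G lam O) (a : V) : ¬ O a a :=
  fun haa => G.irrefl (h.1.1 a a haa)

lemma tto_no_cycle (h : IsTTO G lam O) :
    ∀ n, 1 ≤ n → ∀ f : ℕ → V, (∀ i, f (i + n) = f i) → (∀ i, O (f i) (f (i + 1))) → False := by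
  intro n
  induction n using Nat.strong_induction_on with
  | _ n ih =>
    intro hn f hper hch
    match n, hn with
    | 1, _ =>
      have h01 := hch 0
      rw [show (0:ℕ) + 1 = 0 + 1 from rfl, hper 0] at h01
      exact tto_irrefl h _ h01
    | 2, _ =>
      have h01 := hch 0
      have h12 := hch 1
      rw [show (1+1 : ℕ) = 0 + 2 by ring, hper 0] at h12
      exact tto_asymm h h01 h12
    | (m+3), _ =>
      by_cases hex : ∃ i, lam (f i) (f (i+1)) ≤ lam (f (i+1)) (f (i+2))
      · obtain ⟨i, hi⟩ := hex
        set g : ℕ → V := fun j => f (j + i) with hg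
        have hgper : ∀ j, g (j + (m+3)) = g j := by
          intro j; simp only [hg]; rw [show j + (m+3) + i = (j+i) + (m+3) by ring, hper]
        have hgch : ∀ j, O (g j) (g (j + 1)) := by
          intro j; simp only [hg]; rw [show j + 1 + i = (j + i) + 1 by ring]; exact hch _
        have hg0 : lam (g 0) (g 1) ≤ lam (g 1) (g 2) := by
          simp only [hg, Nat.zero_add]
          rw [show (1:ℕ) + i = i + 1 by ring, show (2:ℕ) + i = i + 2 by ring]
          exact hi
        have hchord : O (g 0) (g 2) :=
          (h.2 _ _ _ (by simpa using hgch 0) (by simpa using hgch 1) hg0).1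
        set k := m + 2 with hk
        have hk2 : 2 ≤ k := by omega
        set g' : ℕ → V := fun j => if j % k = 0 then g 0 else g (j % k + 1) with hg'
        have hper' : ∀ j, g' (j + k) = g' j := by
          intro j; simp only [hg']; rw [Nat.add_mod_right]
        have hch' : ∀ j, O (g' j) (g' (j + 1)) := by
          intro j
          have hjk : j % k < k := Nat.mod_lt _ (by omega)
          have hsucc : (j + 1) % k = (j % k + 1) % k := by
            conv_lhs => rw [Nat.add_mod]
            rw [Nat.mod_eq_of_lt (show 1 < k by omega)]
          by_cases h0 : j % k = 0
          · have h1 : (j + 1) % k = 1 := by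
              rw [hsucc, h0, Nat.mod_eq_of_lt (by omega)]
            simp only [hg', h0, h1, if_pos rfl, if_neg (by omega : (1:ℕ) ≠ 0)]
            exact hchord
          · by_cases h2 : j % k + 1 < k
            · have h1 : (j + 1) % k = j % k + 1 := by
                rw [hsucc, Nat.mod_eq_of_lt h2]
              simp only [hg', h1, if_neg h0, if_neg (by omega : j % k + 1 ≠ 0)]
              exact hgch _
            · have hkm : j % k = k - 1 := by omega
              have h1 : (j + 1) % k = 0 := by
                rw [hsucc, hkm, show k - 1 + 1 = k by omega, Nat.mod_self]
              have hgk : g (k + 1) = g 0 := by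
                rw [show k + 1 = 0 + (m + 3) by omega]; exact hgper 0
              simp only [hg', h1, if_neg h0, if_pos rfl, hkm, show k - 1 + 1 = k by omega]
              rw [← hgk]; exact hgch k
        exact ih k (by omega) (by omega) g' hper' hch'
      · push_neg at hex
        set a : ℕ → ℕ := fun i => lam (f i) (f (i + 1)) with ha
        have hdec : ∀ i, a (i + 1) < a i := by
          intro i
          have := hex i
          simpa [ha, show i + 1 + 1 = i + 2 by ring] using this
        have hbound : ∀ i, a i + i ≤ a 0 := by
          intro i
          induction i with
          | zero => omega
          | succ j ihj => have := hdec j; omega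
        have := hbound (a 0 + 1)
        omega

lemma tto_no_transGen_self (h : IsTTO G lam O) (x : V) : ¬ Relation.TransGen O x x := by
  intro hx
  have hpath : ∀ b : V, Relation.TransGen O x b →
      ∃ n : ℕ, 1 ≤ n ∧ ∃ g : ℕ → V, g 0 = x ∧ g n = b ∧ ∀ i < n, O (g i) (g (i + 1)) := by
    intro b hb
    induction hb with
    | @single y hxy =>
      refine ⟨1, le_refl _, fun i => if i = 0 then x else y, by simp, by simp, ?_⟩
      intro i hi
      interval_cases i
      simpa using hxy
    | @tail y z _ hyz ihy =>
      obtain ⟨n, hn1, g, hg0, hgn, hgch⟩ := ihy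
      refine ⟨n + 1, by omega, fun i => if i = n + 1 then z else g i, ?_, by simp, ?_⟩
      · simp only [if_neg (by omega : (0:ℕ) ≠ n + 1)]; exact hg0
      · intro i hi
        by_cases hin : i = n
        · simp only [hin, if_pos rfl, if_neg (Nat.ne_of_lt (Nat.lt_succ_self n)), hgn]
          exact hyz
        · simp only [if_neg (by omega : i ≠ n + 1), if_neg (by omega : i + 1 ≠ n + 1)]
          exact hgch i (by omega)
  obtain ⟨n, hn1, g, hg0, hgn, hgch⟩ := hpath x hx
  refine tto_no_cycle h n hn1 (fun i => g (i % n)) ?_ ?_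
  · intro i; show g ((i + n) % n) = g (i % n); rw [Nat.add_mod_right]
  intro i
  show O (g (i % n)) (g ((i + 1) % n))
  have hr : i % n < n := Nat.mod_lt _ (by omega)
  have hsucc : (i + 1) % n = (i % n + 1) % n := by
    conv_lhs => rw [Nat.add_mod]
    rcases Nat.lt_or_ge 1 n with h1 | h1
    · rw [Nat.mod_eq_of_lt h1]
    · interval_cases n; simp
  by_cases h2 : i % n + 1 < n
  · rw [hsucc, Nat.mod_eq_of_lt h2]; exact hgch _ hr
  · have heq : i % n + 1 = n := by omega
    have hthis := hgch (i % n) hr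
    rw [heq] at hthis
    rw [hsucc, heq, Nat.mod_self, hg0, ← hgn]
    exact hthis

end aux

theorem stmt16 {V : Type*} [Fintype V] (G : SimpleGraph V) (lam : V → V → ℕ)
    (hsym : ∀ a b, lam a b = lam b a) :
    (∃ O : V → V → Prop, IsTTO G lam O) ↔
      ∃ lt : V → V → Prop, IsStrictTotalOrder V lt ∧
        ∀ a b c, lt a b → lt b c → G.Adj a b → G.Adj b c → lam a b ≤ lam b c →
          G.Adj a c ∧ lam b c ≤ lam a c := by
  constructor
  · rintro ⟨O, hO⟩
    set r : V → V → Prop := fun a b => Relation.TransGen O a b ∨ a = b with hr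
    have hpo : IsPartialOrder V r :=
      { refl := fun a => Or.inr rfl
        trans := by
          rintro a b c (hab | rfl) (hbc | rfl)
          · exact Or.inl (hab.trans hbc)
          · exact Or.inl hab
          · exact Or.inl hbc
          · exact Or.inr rfl
        antisymm := by
          rintro a b (hab | rfl) (hba | hba)
          · exact absurd (hab.trans hba) (tto_no_transGen_self hO a)
          · exact hba.symm
          · rfl
          · rfl }
    obtain ⟨s, hs, hrs⟩ := @extend_partialOrder V r hpo
    haveI := hs
    have htrans : ∀ a b c : V, s a b → s b c → s a c := fun a b c => _root_.trans_of s
    have hantisymm : ∀ a b : V, s a b → s b a → a = b := fun a b => _root_.antisymm_of s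
    have htotal : ∀ a b : V, s a b ∨ s b a := fun a b => total_of s a b
    refine ⟨fun a b => s a b ∧ a ≠ b, ?_, ?_⟩
    · exact
        { irrefl := fun a ha => ha.2 rfl
          trans := by
            rintro a b c ⟨hab, hne⟩ ⟨hbc, hne'⟩
            refine ⟨htrans _ _ _ hab hbc, ?_⟩
            rintro rfl
            exact hne (hantisymm _ _ hab hbc)
          trichotomous := by
            intro a b
            rcases eq_or_ne a b with rfl | hne
            · exact fun _ _ => rfl
            · rcases htotal a b with hab | hba
              · exact fun h1 _ => (h1 ⟨hab, hne⟩).elim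
              · exact fun _ h2 => (h2 ⟨hba, hne.symm⟩).elim }
    · intro a b c hab hbc hadjab hadjbc hlam
      have hOdir : ∀ x y, G.Adj x y → s x y ∧ x ≠ y → O x y := by
        rintro x y hadj ⟨hsxy, hnexy⟩
        by_cases hxy : O x y
        · exact hxy
        · exfalso
          have hyx : O y x := by
            by_contra hyx
            exact hyx ((hO.1.2 y x hadj.symm).2 hxy)
          have hsyx : s y x := hrs y x (Or.inl (Relation.TransGen.single hyx))
          exact hnexy (hantisymm _ _ hsxy hsyx)
      have hOab : O a b := hOdir a b hadjab hab
      have hObc : O b c := hOdir b c hadjbc hbc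
      obtain ⟨hOac, hlac⟩ := hO.2 a b c hOab hObc hlam
      exact ⟨hO.1.1 a c hOac, hlac⟩
  · rintro ⟨lt, hlt, hpat⟩
    haveI := hlt
    have htri : ∀ a b : V, lt a b ∨ a = b ∨ lt b a := fun a b => trichotomous_of lt a b
    have hirr : ∀ a : V, ¬ lt a a := fun a => irrefl_of lt a
    have htr : ∀ a b c : V, lt a b → lt b c → lt a c := fun a b c => _root_.trans_of lt
    refine ⟨fun a b => G.Adj a b ∧ lt a b, ⟨fun a b h => h.1, ?_⟩, ?_⟩
    · intro a b hadj
      constructor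
      · rintro ⟨_, hab⟩ ⟨_, hba⟩
        exact hirr a (htr _ _ _ hab hba)
      · intro hnot
        refine ⟨hadj, ?_⟩
        rcases htri a b with h1 | h1 | h1
        · exact h1
        · exact absurd h1 hadj.ne
        · exact absurd ⟨hadj.symm, h1⟩ hnot
    · rintro a b c ⟨hadjab, hab⟩ ⟨hadjbc, hbc⟩ hlam
      obtain ⟨hadjac, hlac⟩ := hpat a b c hab hbc hadjab hadjbc hlam
      exact ⟨⟨hadjac, htr _ _ _ hab hbc⟩, hlac⟩
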